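/- The CUP update is conflict-free for every unlearning intensity: if u and v are linearly independent and w_f > 0 and w_r > 0, then for every γ ∈ [0,1] the pivoted direction satisfies ⟨g_γ, u⟩ ≥ 0 and ⟨g_γ, v⟩ ≥ 0. -/

import Mathlib

open Real InnerProductSpace

private lemma sq_lt_sq_aux {x y : ℝ} (h1 : x < y) (h2 : -x < y) : x ^ 2 < y ^ 2 := by
  nlinarith

private lemma pos_of_sq_pos_aux {x : ℝ} (h0 : 0 ≤ x) (h : 0 < x ^ 2) : 0 < x := by
  nlinarith

private lemma one_sub_sq_aux {c : ℝ} (h1 : -1 < c) (h2 : c < 1) : 0 ≤ 1 - c ^ 2 := by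
  nlinarith

private lemma one_sub_sq_pos_aux {c : ℝ} (h1 : -1 < c) (h2 : c < 1) : 0 < 1 - c ^ 2 := by
  nlinarith

private lemma sq_inj_aux {x y : ℝ} (hx : 0 ≤ x) (hy : 0 ≤ y) (h : x ^ 2 = y ^ 2) :
    x = y := by nlinarith

set_option maxHeartbeats 4000000 in
/-- The CUP update is conflict-free for every unlearning intensity `γ ∈ [0,1]`:
`⟪g_γ, u⟫ ≥ 0` and `⟪g_γ, v⟫ ≥ 0`. -/
theorem stmt_13 {E : Type*} [NormedAddCommGroup E] [InnerProductSpace ℝ E]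
    (u v : E) (hu : u ≠ 0) (hv : v ≠ 0)
    (hind : LinearIndependent ℝ ![u, v])
    (wf wr : ℝ) (hwf : 0 < wf) (hwr : 0 < wr)
    (t : E) (ht : t = wf • u + wr • v)
    (geff : E) (hgeff : geff = t - (⟪t, v⟫_ℝ / ‖v‖ ^ 2) • v)
    (gfid : E) (hgfid : gfid = t - (⟪t, u⟫_ℝ / ‖u‖ ^ 2) • u)
    (φ : ℝ) (hφ : φ = Real.arccos (⟪gfid, geff⟫_ℝ / (‖gfid‖ * ‖geff‖)))
    (γ : ℝ) (hγ : γ ∈ Set.Icc (0 : ℝ) 1) :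
    0 ≤ ⟪Real.cos (γ * φ) • (‖gfid‖⁻¹ • gfid) + Real.sin (γ * φ) • (‖u‖⁻¹ • u), u⟫_ℝ ∧
      0 ≤ ⟪Real.cos (γ * φ) • (‖gfid‖⁻¹ • gfid) + Real.sin (γ * φ) • (‖u‖⁻¹ • u), v⟫_ℝ := by
  obtain ⟨hγ0, hγ1⟩ := hγ
  have hnu : (0:ℝ) < ‖u‖ := norm_pos_iff.mpr hu
  have hnv : (0:ℝ) < ‖v‖ := norm_pos_iff.mpr hv
  set a : ℝ := ⟪u, v⟫_ℝ with ha
  clear_value a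
  have hvu : ⟪v, u⟫_ℝ = a := (real_inner_comm v u).symm.trans ha.symm
  have hpair := LinearIndependent.pair_iff.mp hind
  -- strict Cauchy-Schwarz
  have hcs1 : a < ‖u‖ * ‖v‖ := by
    rw [ha]
    refine inner_lt_norm_mul_iff_real.mpr fun h => ?_
    have := hpair (‖v‖) (-‖u‖) (by rw [neg_smul, ← h]; abel)
    exact hnv.ne' this.1
  have hcs2 : -a < ‖u‖ * ‖v‖ := by
    rw [ha]
    have h := inner_lt_norm_mul_iff_real (F := E) (x := u) (y := -v)
    rw [norm_neg, inner_neg_right] at h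
    refine h.mpr fun hh => ?_
    have := hpair (‖v‖) (‖u‖) (by rw [smul_neg] at hh; rw [hh]; abel)
    exact hnv.ne' this.1
  have hcsq : a ^ 2 < (‖u‖ * ‖v‖) ^ 2 := sq_lt_sq_aux hcs1 hcs2
  have hbig : 0 < ‖u‖ ^ 2 * ‖v‖ ^ 2 - a ^ 2 := by
    have h2 := hcsq
    have h3 : (‖u‖ * ‖v‖) ^ 2 = ‖u‖ ^ 2 * ‖v‖ ^ 2 := by ring
    linarith [h3 ▸ h2]
  -- simplify gfid and geff
  have htu : ⟪t, u⟫_ℝ = wf * ‖u‖ ^ 2 + wr * a := by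
    rw [ht, inner_add_left, real_inner_smul_left, real_inner_smul_left,
      real_inner_self_eq_norm_sq, real_inner_comm, ← ha]
  have htv : ⟪t, v⟫_ℝ = wf * a + wr * ‖v‖ ^ 2 := by
    rw [ht, inner_add_left, real_inner_smul_left, real_inner_smul_left,
      real_inner_self_eq_norm_sq, ← ha]
  have hfid : gfid = wr • v - (wr * a / ‖u‖ ^ 2) • u := by
    rw [hgfid, htu, ht]
    have h1 : (wf * ‖u‖ ^ 2 + wr * a) / ‖u‖ ^ 2 = wf + wr * a / ‖u‖ ^ 2 := by
      field_simp
    rw [h1]; module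
  have hge : geff = wf • u - (wf * a / ‖v‖ ^ 2) • v := by
    rw [hgeff, htv, ht]
    have h1 : (wf * a + wr * ‖v‖ ^ 2) / ‖v‖ ^ 2 = wf * a / ‖v‖ ^ 2 + wr := by
      field_simp
    rw [h1]; module
  -- inner products involving gfid
  have hgu : ⟪gfid, u⟫_ℝ = 0 := by
    rw [hfid, inner_sub_left, real_inner_smul_left, real_inner_smul_left,
      real_inner_self_eq_norm_sq, hvu]
    field_simp
    ring
  have hgv : ⟪gfid, v⟫_ℝ = wr * (‖v‖ ^ 2 - a ^ 2 / ‖u‖ ^ 2) := by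
    rw [hfid, inner_sub_left, real_inner_smul_left, real_inner_smul_left,
      real_inner_self_eq_norm_sq, ← ha]
    field_simp
  have hs2 : ‖gfid‖ ^ 2 = wr ^ 2 * (‖v‖ ^ 2 - a ^ 2 / ‖u‖ ^ 2) := by
    have h0 : ‖gfid‖ ^ 2 = ⟪gfid, gfid⟫_ℝ := (real_inner_self_eq_norm_sq gfid).symm
    rw [h0]
    nth_rewrite 2 [hfid]
    rw [inner_sub_right, real_inner_smul_right, real_inner_smul_right, hgv, hgu]
    ring
  have hpos : 0 < ‖v‖ ^ 2 - a ^ 2 / ‖u‖ ^ 2 := by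
    rw [sub_pos, div_lt_iff₀ (by positivity)]
    nlinarith [hbig]
  have hs : 0 < ‖gfid‖ := by
    exact pos_of_sq_pos_aux (norm_nonneg gfid) (by rw [hs2]; positivity)
  have hgeu : ⟪geff, u⟫_ℝ = wf * (‖u‖ ^ 2 - a ^ 2 / ‖v‖ ^ 2) := by
    rw [hge, inner_sub_left, real_inner_smul_left, real_inner_smul_left,
      real_inner_self_eq_norm_sq, hvu]
    field_simp
  have hgev : ⟪geff, v⟫_ℝ = 0 := by
    rw [hge, inner_sub_left, real_inner_smul_left, real_inner_smul_left,
      real_inner_self_eq_norm_sq, ← ha]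
    field_simp
    ring
  have hr2 : ‖geff‖ ^ 2 = wf ^ 2 * (‖u‖ ^ 2 - a ^ 2 / ‖v‖ ^ 2) := by
    have h0 : ‖geff‖ ^ 2 = ⟪geff, geff⟫_ℝ := (real_inner_self_eq_norm_sq geff).symm
    rw [h0]
    nth_rewrite 2 [hge]
    rw [inner_sub_right, real_inner_smul_right, real_inner_smul_right, hgeu, hgev]
    ring
  have hrpos : 0 < ‖u‖ ^ 2 - a ^ 2 / ‖v‖ ^ 2 := by
    rw [sub_pos, div_lt_iff₀ (by positivity)]
    nlinarith [hbig]
  have hr : 0 < ‖geff‖ := by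
    exact pos_of_sq_pos_aux (norm_nonneg geff) (by rw [hr2]; positivity)
  have hip : ⟪gfid, geff⟫_ℝ
      = wf * wr * (-a) * (‖u‖ ^ 2 * ‖v‖ ^ 2 - a ^ 2) / (‖u‖ ^ 2 * ‖v‖ ^ 2) := by
    nth_rewrite 1 [hge]
    rw [inner_sub_right, real_inner_smul_right, real_inner_smul_right, hgu, hgv]
    field_simp; ring
  -- product of norms
  have hsr : ‖gfid‖ * ‖geff‖
      = wf * wr * (‖u‖ ^ 2 * ‖v‖ ^ 2 - a ^ 2) / (‖u‖ * ‖v‖) := by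
    refine sq_inj_aux (by positivity) ?_ ?_
    · exact le_of_lt (div_pos (mul_pos (mul_pos hwf hwr) hbig) (by positivity))
    · rw [mul_pow, hs2, hr2]
      field_simp
  -- the cosine argument
  set c : ℝ := a / (‖u‖ * ‖v‖) with hc
  clear_value c
  have hc1 : -1 < c := by
    rw [hc, lt_div_iff₀ (by positivity)]; linarith
  have hc2 : c < 1 := by
    rw [hc, div_lt_one (by positivity)]; linarith
  have harg : ⟪gfid, geff⟫_ℝ / (‖gfid‖ * ‖geff‖) = -c := by
    rw [hip, hsr, hc]
    have hne : ‖u‖ ^ 2 * ‖v‖ ^ 2 - a ^ 2 ≠ 0 := ne_of_gt hbig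
    field_simp
  set α : ℝ := Real.arccos c with hα
  clear_value α
  have hφ' : φ = π - α := by rw [hφ, harg, Real.arccos_neg, ← hα]
  have hα0 : 0 < α := by rw [hα]; exact Real.arccos_pos.mpr hc2
  have hαπ : α < π := by
    have h1 : 0 < Real.arccos (-c) := Real.arccos_pos.mpr (by linarith)
    rw [Real.arccos_neg, ← hα] at h1; linarith
  have hφ0 : 0 ≤ φ := by rw [hφ']; linarith
  have hγφ0 : 0 ≤ γ * φ := mul_nonneg hγ0 hφ0
  have hγφπ : γ * φ ≤ π - α := by
    rw [hφ']
    calc γ * (π - α) ≤ 1 * (π - α) := by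
          apply mul_le_mul_of_nonneg_right hγ1; linarith
      _ = π - α := one_mul _
  have hsin : 0 ≤ Real.sin (γ * φ) :=
    Real.sin_nonneg_of_nonneg_of_le_pi hγφ0 (by linarith)
  constructor
  · rw [inner_add_left, real_inner_smul_left, real_inner_smul_left,
      real_inner_smul_left, real_inner_smul_left, hgu,
      real_inner_self_eq_norm_sq]
    have h1 : (0:ℝ) ≤ Real.sin (γ * φ) * (‖u‖⁻¹ * ‖u‖ ^ 2) := by positivity
    linarith
  · rw [inner_add_left, real_inner_smul_left, real_inner_smul_left,
      real_inner_smul_left, real_inner_smul_left, hgv, ← ha]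
    -- rewrite the two coefficients in terms of α
    have hcosα : Real.cos α = c := by rw [hα]; exact Real.cos_arccos (le_of_lt hc1) (le_of_lt hc2)
    have hsinα : Real.sin α = Real.sqrt (1 - c ^ 2) := by rw [hα]; exact Real.sin_arccos c
    have hsinα0 : 0 < Real.sin α := Real.sin_pos_of_pos_of_lt_pi hα0 hαπ
    have key1 : ‖gfid‖⁻¹ * (wr * (‖v‖ ^ 2 - a ^ 2 / ‖u‖ ^ 2)) = ‖v‖ * Real.sin α := by
      refine sq_inj_aux (by positivity) (by positivity) ?_
      have hs1 : Real.sin α ^ 2 = 1 - c ^ 2 := by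
        rw [hsinα, Real.sq_sqrt (one_sub_sq_aux hc1 hc2)]
      have h1c : (0:ℝ) < 1 - c ^ 2 := one_sub_sq_pos_aux hc1 hc2
      have hXv : ‖v‖ ^ 2 - a ^ 2 / ‖u‖ ^ 2 = ‖v‖ ^ 2 * (1 - c ^ 2) := by
        rw [hc]; field_simp
      rw [hXv, mul_pow, mul_pow, mul_pow, inv_pow, hs2, hXv, mul_pow, hs1]
      field_simp [ne_of_gt h1c]
    have key2 : ‖u‖⁻¹ * a = ‖v‖ * Real.cos α := by
      rw [hcosα, hc]; field_simp
    rw [key1, key2]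
    have hkey : Real.cos (γ * φ) * (‖v‖ * Real.sin α) + Real.sin (γ * φ) * (‖v‖ * Real.cos α)
        = ‖v‖ * Real.sin (α + γ * φ) := by
      rw [Real.sin_add]; ring
    rw [hkey]
    have hsum : 0 ≤ Real.sin (α + γ * φ) :=
      Real.sin_nonneg_of_nonneg_of_le_pi (by linarith) (by linarith)
    positivity
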